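/- Let G = (V, E) be a finite simple undirected graph, let f : V → ℝ, and let CS = {C_1, …, C_m} be a partition of V. Define ν(C) = Σ_{u ∈ N(C)} f(u) for C ⊆ V, where N(C) = (⋃_{c∈C} N(c)) ∖ C. For u ∈ V, let deg_CS(u) be the number of parts of CS other than the part containing u that contain at least one neighbour of u. Fix j ∈ {1, …, m} and v ∈ C_j, and for u ∈ V let deg_j(u) = |N(u) ∩ C_j|. For R ⊆ {1, …, m}, let Q_R = ⋃_{r∈R} C_r. Fix integers 0 ≤ k ≤ m−1 and 0 ≤ l ≤ |C_j|−1. Then the average of ν(Q_T ∪ C ∪ {v}) − ν(Q_T ∪ C), taken over all pairs (T, C) with T ⊆ {1, …, m}∖{j}, |T| = k and C ⊆ C_j∖{v}, |C| = l, equals Σ_{u ∈ N(v) ∩ C_j} f(u)·C(m−1−deg_CS(u), k)·C(|C_j|−1−deg_j(u), l) / (C(m−1, k)·C(|C_j|−1, l)) + Σ_{u ∈ N(v) ∖ C_j} f(u)·C(m−1−deg_CS(u), k)·C(|C_j|−deg_j(u), l) / (C(m−1, k)·C(|C_j|−1, l)) − f(v)·(1 − C(m−1−deg_CS(v), k)·C(|C_j|−1−deg_j(v),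 l) / (C(m−1, k)·C(|C_j|−1, l))), where C(a, b) denotes the binomial coefficient with the convention C(a, b) = 0 whenever a < b. -/

import Mathlib

open Finset

lemma pair_count {V : Type*} [DecidableEq V] (A : Finset (Finset V)) (S B : Finset V) (k l : ℕ) :
    (∑ T ∈ A.powersetCard k, ∑ C ∈ S.powersetCard l,
        (if Disjoint B (T.biUnion id ∪ C) then (1:ℝ) else 0))
    = ((A.filter fun P => Disjoint B P).card.choose k : ℝ) * (((S \ B).card.choose l : ℝ)) := by
  have h1 : ∀ (T : Finset (Finset V)) (C : Finset V),
      (if Disjoint B (T.biUnion id ∪ C) then (1:ℝ) else 0)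
      = (if Disjoint B (T.biUnion id) then (1:ℝ) else 0) * (if Disjoint B C then (1:ℝ) else 0) := by
    intro T C
    simp only [disjoint_union_right]
    by_cases h : Disjoint B (T.biUnion id) <;> by_cases h2 : Disjoint B C <;> simp [h, h2]
  simp_rw [h1, ← Finset.mul_sum, ← Finset.sum_mul]
  have h2 : (∑ T ∈ A.powersetCard k, if Disjoint B (T.biUnion id) then (1:ℝ) else 0)
      = ((A.filter fun P => Disjoint B P).card.choose k : ℝ) := by
    rw [Finset.sum_boole]
    congr 1
    rw [show (A.powersetCard k).filter (fun T => Disjoint B (T.biUnion id)) =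
        (A.filter (fun P => Disjoint B P)).powersetCard k from ?_, card_powersetCard]
    ext T
    simp only [mem_filter, mem_powersetCard, disjoint_biUnion_right, subset_iff, mem_filter, id]
    constructor
    · rintro ⟨⟨ha, hb⟩, hc⟩
      exact ⟨fun x hx => ⟨ha hx, hc _ hx⟩, hb⟩
    · rintro ⟨ha, hb⟩
      exact ⟨⟨fun x hx => (ha hx).1, hb⟩, fun P hP => (ha hP).2⟩
  have h3 : (∑ C ∈ S.powersetCard l, if Disjoint B C then (1:ℝ) else 0)
      = (((S \ B).card.choose l : ℝ)) := by
    rw [Finset.sum_boole]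
    congr 1
    rw [show (S.powersetCard l).filter (fun C => Disjoint B C) = (S \ B).powersetCard l from ?_,
      card_powersetCard]
    ext C
    simp only [mem_filter, mem_powersetCard, subset_sdiff]
    tauto
  rw [h2, h3]
lemma marginal {V : Type*} [Fintype V] [DecidableEq V] (G : SimpleGraph V) [DecidableRel G.Adj]
    (f : V → ℝ) (v : V) (Q : Finset V) (hvQ : v ∉ Q) :
    (∑ u ∈ (insert v Q).biUnion (fun c => G.neighborFinset c) \ (insert v Q), f u)
      - (∑ u ∈ Q.biUnion (fun c => G.neighborFinset c) \ Q, f u)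
    = (∑ u ∈ G.neighborFinset v,
        f u * (if Disjoint (insert u (G.neighborFinset u)) Q then (1:ℝ) else 0))
      - f v * (1 - (if Disjoint (insert v (G.neighborFinset v)) Q then (1:ℝ) else 0)) := by
  classical
  have e : ∀ S : Finset V, (∑ u ∈ S.biUnion (fun c => G.neighborFinset c) \ S, f u)
      = ∑ u : V, if u ∉ S ∧ ∃ w ∈ S, G.Adj u w then f u else 0 := by
    intro S
    rw [← Finset.sum_filter]
    apply Finset.sum_congr _ (fun _ _ => rfl)
    ext u
    simp only [mem_sdiff, mem_biUnion, SimpleGraph.mem_neighborFinset, mem_filter, mem_univ,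
      true_and]
    constructor
    · rintro ⟨⟨c, hc, hadj⟩, hu⟩; exact ⟨hu, c, hc, hadj.symm⟩
    · rintro ⟨hu, w, hw, hadj⟩; exact ⟨⟨w, hw, hadj.symm⟩, hu⟩
  rw [e, e, ← Finset.sum_sub_distrib]
  have e2 : (∑ u ∈ G.neighborFinset v,
        f u * (if Disjoint (insert u (G.neighborFinset u)) Q then (1:ℝ) else 0))
      = ∑ u : V, if u ∈ G.neighborFinset v then
          f u * (if Disjoint (insert u (G.neighborFinset u)) Q then (1:ℝ) else 0) else 0 := by
    rw [Finset.sum_ite_mem, univ_inter]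
  have e3 : f v * (1 - (if Disjoint (insert v (G.neighborFinset v)) Q then (1:ℝ) else 0))
      = ∑ u : V, if u = v then
          f u * (1 - (if Disjoint (insert u (G.neighborFinset u)) Q then (1:ℝ) else 0)) else 0 := by
    rw [Finset.sum_ite_eq' univ v]
    simp
  rw [e2, e3, ← Finset.sum_sub_distrib]
  apply Finset.sum_congr rfl
  intro u _
  have hdis : ∀ x : V, x ∉ Q →
      (Disjoint (insert x (G.neighborFinset x)) Q ↔ ¬ ∃ w ∈ Q, G.Adj x w) := by
    intro x hx
    rw [Finset.disjoint_left]
    constructor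
    · rintro h ⟨w, hw, hadj⟩
      exact h (mem_insert_of_mem (by rwa [SimpleGraph.mem_neighborFinset])) hw
    · intro h a ha haQ
      rcases mem_insert.1 ha with rfl | ha
      · exact hx haQ
      · exact h ⟨a, haQ, (SimpleGraph.mem_neighborFinset _ _ _).1 ha⟩
  by_cases huv : u = v
  · subst huv
    have h1 : ¬ (u ∉ insert u Q ∧ ∃ w ∈ insert u Q, G.Adj u w) := by
      simp
    have h4 : u ∉ G.neighborFinset u := by simp
    rw [if_neg h1, if_pos rfl, if_neg h4]
    by_cases hex : ∃ w ∈ Q, G.Adj u w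
    · rw [if_pos ⟨hvQ, hex⟩, if_neg (by rw [hdis u hvQ]; exact not_not_intro hex)]
      ring
    · rw [if_neg (fun h => hex h.2), if_pos ((hdis u hvQ).mpr hex)]
      ring
  · rw [if_neg huv]
    by_cases hadj : G.Adj v u
    · have hmem : u ∈ G.neighborFinset v := by rwa [SimpleGraph.mem_neighborFinset]
      rw [if_pos hmem]
      by_cases huQ : u ∈ Q
      · have h1 : ¬ (u ∉ insert v Q ∧ ∃ w ∈ insert v Q, G.Adj u w) := by
          simp only [mem_insert, not_and, not_not]
          intro h; exact absurd (Or.inr huQ) h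
        have h2 : ¬ (u ∉ Q ∧ ∃ w ∈ Q, G.Adj u w) := fun h => h.1 huQ
        have h3 : ¬ Disjoint (insert u (G.neighborFinset u)) Q := by
          rw [Finset.disjoint_left]
          intro h; exact h (mem_insert_self u _) huQ
        rw [if_neg h1, if_neg h2, if_neg h3]
        ring
      · have h1 : (u ∉ insert v Q ∧ ∃ w ∈ insert v Q, G.Adj u w) :=
          ⟨by simp [huv, huQ], v, mem_insert_self v Q, hadj.symm⟩
        rw [if_pos h1]
        by_cases hex : ∃ w ∈ Q, G.Adj u w
        · rw [if_pos ⟨huQ, hex⟩, if_neg (by rw [hdis u huQ]; exact not_not_intro hex)]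
          ring
        · rw [if_neg (fun h => hex h.2), if_pos ((hdis u huQ).mpr hex)]
          ring
    · have hmem : u ∉ G.neighborFinset v := by rwa [SimpleGraph.mem_neighborFinset]
      rw [if_neg hmem]
      have hiff : (u ∉ insert v Q ∧ ∃ w ∈ insert v Q, G.Adj u w) ↔
          (u ∉ Q ∧ ∃ w ∈ Q, G.Adj u w) := by
        constructor
        · rintro ⟨h1, w, hw, hadjw⟩
          rcases mem_insert.1 hw with rfl | hw
          · exact absurd hadjw.symm hadj
          · exact ⟨fun hq => h1 (mem_insert_of_mem hq), w, hw, hadjw⟩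
        · rintro ⟨h1, w, hw, hadjw⟩
          refine ⟨fun h => ?_, w, mem_insert_of_mem hw, hadjw⟩
          rcases mem_insert.1 h with rfl | h
          · exact huv rfl
          · exact h1 h
      by_cases hc : u ∉ Q ∧ ∃ w ∈ Q, G.Adj u w
      · rw [if_pos (hiff.mpr hc), if_pos hc]; ring
      · rw [if_neg (fun h => hc (hiff.mp h)), if_neg hc]


/-- Expected marginal contribution of a node `v` to a random coalition `Q_T ∪ C`,
where `T` is a uniformly random size-`k` set of communities other than `v`'s own
community `C_j`, and `C` is a uniformly random size-`l` subset of `C_j \ {v}`, in the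
weighted group degree game `ν(C) = Σ_{u ∈ N(C)} f(u)`. -/
theorem owen_degree_expected_marginal_contribution {V : Type*} [Fintype V] [DecidableEq V]
    (G : SimpleGraph V) [DecidableRel G.Adj] (f : V → ℝ)
    (CS : Finset (Finset V))
    (hne : ∀ P ∈ CS, P.Nonempty)
    (hdisj : ∀ P ∈ CS, ∀ Q ∈ CS, P ≠ Q → Disjoint P Q)
    (hcover : ∀ u : V, ∃ P ∈ CS, u ∈ P)
    (ν : Finset V → ℝ)
    (hν : ∀ C : Finset V, ν C = ∑ u ∈ C.biUnion (fun c => G.neighborFinset c) \ C, f u)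
    (degCS : V → ℕ)
    (hdegCS : ∀ u : V,
      degCS u = (CS.filter (fun P => u ∉ P ∧ ∃ w ∈ P, G.Adj u w)).card)
    (Cj : Finset V) (hCj : Cj ∈ CS) (v : V) (hv : v ∈ Cj)
    (degj : V → ℕ) (hdegj : ∀ u : V, degj u = (G.neighborFinset u ∩ Cj).card)
    (m : ℕ) (hm : m = CS.card)
    (k l : ℕ) (hk : k ≤ m - 1) (hl : l ≤ Cj.card - 1) :
    (∑ T ∈ (CS.erase Cj).powersetCard k, ∑ C ∈ (Cj.erase v).powersetCard l,
        (ν (insert v (T.biUnion id ∪ C)) - ν (T.biUnion id ∪ C)))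
      / ((Nat.choose (m - 1) k : ℝ) * (Nat.choose (Cj.card - 1) l : ℝ))
    = (∑ u ∈ G.neighborFinset v ∩ Cj,
          f u * ((Nat.choose (m - 1 - degCS u) k : ℝ)
                  * (Nat.choose (Cj.card - 1 - degj u) l : ℝ))
            / ((Nat.choose (m - 1) k : ℝ) * (Nat.choose (Cj.card - 1) l : ℝ)))
      + (∑ u ∈ G.neighborFinset v \ Cj,
          f u * ((Nat.choose (m - 1 - degCS u) k : ℝ)
                  * (Nat.choose (Cj.card - degj u) l : ℝ))
            / ((Nat.choose (m - 1) k : ℝ) * (Nat.choose (Cj.card - 1) l : ℝ)))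
      - f v * (1 - ((Nat.choose (m - 1 - degCS v) k : ℝ)
                  * (Nat.choose (Cj.card - 1 - degj v) l : ℝ))
            / ((Nat.choose (m - 1) k : ℝ) * (Nat.choose (Cj.card - 1) l : ℝ))) := by
  classical
  -- v is in no coalition
  have hvnotQ : ∀ T ∈ (CS.erase Cj).powersetCard k, ∀ C ∈ (Cj.erase v).powersetCard l,
      v ∉ T.biUnion id ∪ C := by
    intro T hT C hC
    rw [mem_union]
    rintro (hvT | hvC)
    · rw [mem_biUnion] at hvT
      obtain ⟨P, hPT, hvP⟩ := hvT
      have hPA : P ∈ CS.erase Cj := (mem_powersetCard.1 hT).1 hPT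
      have hd := hdisj Cj hCj P (mem_of_mem_erase hPA) (fun h => (mem_erase.1 hPA).1 h.symm)
      exact (Finset.disjoint_left.1 hd) hv hvP
    · exact (mem_erase.1 ((mem_powersetCard.1 hC).1 hvC)).1 rfl
  -- marginal contribution rewrite
  have hL : ∀ T ∈ (CS.erase Cj).powersetCard k, ∀ C ∈ (Cj.erase v).powersetCard l,
      ν (insert v (T.biUnion id ∪ C)) - ν (T.biUnion id ∪ C)
      = (∑ u ∈ G.neighborFinset v, f u *
          (if Disjoint (insert u (G.neighborFinset u)) (T.biUnion id ∪ C) then (1:ℝ) else 0))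
        - f v * (1 - (if Disjoint (insert v (G.neighborFinset v)) (T.biUnion id ∪ C)
            then (1:ℝ) else 0)) := by
    intro T hT C hC
    rw [hν, hν]
    exact marginal G f v _ (hvnotQ T hT C hC)
  have hA : (CS.erase Cj).card = m - 1 := by rw [card_erase_of_mem hCj, hm]
  have hS : (Cj.erase v).card = Cj.card - 1 := card_erase_of_mem hv
  -- counting community-level
  have hN1 : ∀ u : V, (u = v ∨ G.Adj u v) →
      ((CS.erase Cj).filter fun P => Disjoint (insert u (G.neighborFinset u)) P).card
        = m - 1 - degCS u := by
    intro u hu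
    have hsplit := Finset.card_filter_add_card_filter_not
      (s := CS.erase Cj) (fun P => Disjoint (insert u (G.neighborFinset u)) P)
    have hneg : ((CS.erase Cj).filter fun P =>
        ¬ Disjoint (insert u (G.neighborFinset u)) P).card = degCS u := by
      by_cases huCj : u ∈ Cj
      · rw [hdegCS]
        congr 1
        ext P
        simp only [mem_filter, mem_erase]
        constructor
        · rintro ⟨⟨hPne, hPCS⟩, hnd⟩
          have hdCjP := hdisj Cj hCj P hPCS (fun h => hPne h.symm)
          have huP : u ∉ P := Finset.disjoint_left.1 hdCjP huCj
          obtain ⟨a, haB, haP⟩ := Finset.not_disjoint_iff.1 hnd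
          rcases mem_insert.1 haB with rfl | haN
          · exact absurd haP huP
          · exact ⟨hPCS, huP, a, haP, (SimpleGraph.mem_neighborFinset _ _ _).1 haN⟩
        · rintro ⟨hPCS, huP, w, hwP, hadj⟩
          refine ⟨⟨fun h => huP (h ▸ huCj), hPCS⟩, ?_⟩
          exact Finset.not_disjoint_iff.2
            ⟨w, mem_insert_of_mem (by rwa [SimpleGraph.mem_neighborFinset]), hwP⟩
      · have hadjuv : G.Adj u v := by
          rcases hu with rfl | h
          · exact absurd hv huCj
          · exact h
        obtain ⟨Pu, hPuCS, huPu⟩ := hcover u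
        have hPune : Pu ≠ Cj := fun h => huCj (h ▸ huPu)
        set S0 := CS.filter (fun P => P ≠ Cj ∧ u ∉ P ∧ ∃ w ∈ P, G.Adj u w) with hS0
        have h1 : (CS.erase Cj).filter (fun P => ¬ Disjoint (insert u (G.neighborFinset u)) P)
            = insert Pu S0 := by
          ext P
          simp only [mem_filter, mem_erase, mem_insert, hS0]
          constructor
          · rintro ⟨⟨hPne, hPCS⟩, hnd⟩
            by_cases huP : u ∈ P
            · left
              by_contra hne2
              exact (Finset.disjoint_left.1 (hdisj P hPCS Pu hPuCS hne2)) huP huPu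
            · right
              obtain ⟨a, haB, haP⟩ := Finset.not_disjoint_iff.1 hnd
              rcases mem_insert.1 haB with rfl | haN
              · exact absurd haP huP
              · exact ⟨hPCS, hPne, huP, a, haP, (SimpleGraph.mem_neighborFinset _ _ _).1 haN⟩
          · rintro (rfl | ⟨hPCS, hPne, huP, w, hwP, hadj⟩)
            · exact ⟨⟨hPune, hPuCS⟩, Finset.not_disjoint_iff.2 ⟨u, mem_insert_self _ _, huPu⟩⟩
            · exact ⟨⟨hPne, hPCS⟩, Finset.not_disjoint_iff.2
                ⟨w, mem_insert_of_mem (by rwa [SimpleGraph.mem_neighborFinset]), hwP⟩⟩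
        have h2 : CS.filter (fun P => u ∉ P ∧ ∃ w ∈ P, G.Adj u w) = insert Cj S0 := by
          ext P
          simp only [mem_filter, mem_insert, hS0]
          constructor
          · rintro ⟨hPCS, huP, hex⟩
            by_cases hPCj : P = Cj
            · exact Or.inl hPCj
            · exact Or.inr ⟨hPCS, hPCj, huP, hex⟩
          · rintro (rfl | ⟨hPCS, _, huP, hex⟩)
            · exact ⟨hCj, huCj, v, hv, hadjuv⟩
            · exact ⟨hPCS, huP, hex⟩
        have hPunotS0 : Pu ∉ S0 := by
          simp only [hS0, mem_filter]
          rintro ⟨-, -, h, -⟩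
          exact h huPu
        have hCjnotS0 : Cj ∉ S0 := by
          simp only [hS0, mem_filter]
          rintro ⟨-, h, -⟩
          exact h rfl
        rw [hdegCS, h1, h2, card_insert_of_notMem hPunotS0, card_insert_of_notMem hCjnotS0]
    omega
  -- counting node-level
  have hN2a : ∀ u : V, u ∈ Cj → v ∈ insert u (G.neighborFinset u) →
      ((Cj.erase v) \ insert u (G.neighborFinset u)).card = Cj.card - 1 - degj u := by
    intro u huCj hvB
    have hst : Cj.erase v \ insert u (G.neighborFinset u)
        = Cj \ (Cj ∩ insert u (G.neighborFinset u)) := by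
      ext a
      simp only [mem_sdiff, mem_erase, mem_inter]
      constructor
      · rintro ⟨⟨h1, h2⟩, h3⟩; exact ⟨h2, fun h => h3 h.2⟩
      · rintro ⟨h1, h2⟩
        exact ⟨⟨fun h => h2 ⟨h1, h ▸ hvB⟩, h1⟩, fun h => h2 ⟨h1, h⟩⟩
    rw [hst, card_sdiff_of_subset inter_subset_left, Finset.inter_insert_of_mem huCj,
      card_insert_of_notMem (by simp), inter_comm, ← hdegj]
    omega
  have hN2b : ∀ u : V, u ∉ Cj → v ∈ insert u (G.neighborFinset u) →
      ((Cj.erase v) \ insert u (G.neighborFinset u)).card = Cj.card - degj u := by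
    intro u huCj hvB
    have hst : Cj.erase v \ insert u (G.neighborFinset u)
        = Cj \ (Cj ∩ insert u (G.neighborFinset u)) := by
      ext a
      simp only [mem_sdiff, mem_erase, mem_inter]
      constructor
      · rintro ⟨⟨h1, h2⟩, h3⟩; exact ⟨h2, fun h => h3 h.2⟩
      · rintro ⟨h1, h2⟩
        exact ⟨⟨fun h => h2 ⟨h1, h ▸ hvB⟩, h1⟩, fun h => h2 ⟨h1, h⟩⟩
    rw [hst, card_sdiff_of_subset inter_subset_left, Finset.inter_insert_of_notMem huCj,
      inter_comm, ← hdegj]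
  -- swap sums
  have hswap : (∑ T ∈ (CS.erase Cj).powersetCard k, ∑ C ∈ (Cj.erase v).powersetCard l,
      (ν (insert v (T.biUnion id ∪ C)) - ν (T.biUnion id ∪ C)))
    = (∑ u ∈ G.neighborFinset v, f u *
        ((((CS.erase Cj).filter fun P =>
            Disjoint (insert u (G.neighborFinset u)) P).card.choose k : ℝ)
          * (((Cj.erase v \ insert u (G.neighborFinset u)).card.choose l : ℝ))))
      - f v * ((((m-1).choose k : ℝ) * ((Cj.card-1).choose l : ℝ))
          - ((((CS.erase Cj).filter fun P =>
              Disjoint (insert v (G.neighborFinset v)) P).card.choose k : ℝ)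
            * (((Cj.erase v \ insert v (G.neighborFinset v)).card.choose l : ℝ)))) := by
    rw [Finset.sum_congr rfl (fun T hT => Finset.sum_congr rfl (fun C hC => hL T hT C hC))]
    rw [Finset.sum_congr rfl (fun T _ => Finset.sum_sub_distrib _ _), Finset.sum_sub_distrib]
    congr 1
    · rw [Finset.sum_congr rfl (fun T _ => Finset.sum_comm), Finset.sum_comm]
      apply Finset.sum_congr rfl
      intro u _
      simp_rw [← Finset.mul_sum]
      rw [pair_count]
    · simp_rw [← Finset.mul_sum]
      congr 1
      simp_rw [Finset.sum_sub_distrib]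
      rw [pair_count]
      congr 1
      simp only [Finset.sum_const, nsmul_eq_mul, mul_one, card_powersetCard, hA, hS]
  rw [hswap]
  rw [← Finset.sum_inter_add_sum_sdiff (G.neighborFinset v) Cj]
  have hpart1 : ∀ u ∈ G.neighborFinset v ∩ Cj,
      f u * ((((CS.erase Cj).filter fun P =>
            Disjoint (insert u (G.neighborFinset u)) P).card.choose k : ℝ)
          * (((Cj.erase v \ insert u (G.neighborFinset u)).card.choose l : ℝ)))
      = f u * ((Nat.choose (m - 1 - degCS u) k : ℝ)
                  * (Nat.choose (Cj.card - 1 - degj u) l : ℝ)) := by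
    intro u hu
    have hadj : G.Adj v u := (SimpleGraph.mem_neighborFinset _ _ _).1 (mem_inter.1 hu).1
    rw [hN1 u (Or.inr hadj.symm), hN2a u (mem_inter.1 hu).2
      (mem_insert_of_mem (by rw [SimpleGraph.mem_neighborFinset]; exact hadj.symm))]
  have hpart2 : ∀ u ∈ G.neighborFinset v \ Cj,
      f u * ((((CS.erase Cj).filter fun P =>
            Disjoint (insert u (G.neighborFinset u)) P).card.choose k : ℝ)
          * (((Cj.erase v \ insert u (G.neighborFinset u)).card.choose l : ℝ)))
      = f u * ((Nat.choose (m - 1 - degCS u) k : ℝ)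
                  * (Nat.choose (Cj.card - degj u) l : ℝ)) := by
    intro u hu
    have hadj : G.Adj v u := (SimpleGraph.mem_neighborFinset _ _ _).1 (mem_sdiff.1 hu).1
    rw [hN1 u (Or.inr hadj.symm), hN2b u (mem_sdiff.1 hu).2
      (mem_insert_of_mem (by rw [SimpleGraph.mem_neighborFinset]; exact hadj.symm))]
  rw [Finset.sum_congr rfl hpart1, Finset.sum_congr rfl hpart2,
    hN1 v (Or.inl rfl), hN2a v hv (mem_insert_self v _)]
  have hc1 : ((m-1).choose k : ℝ) ≠ 0 := Nat.cast_ne_zero.2 (Nat.choose_pos hk).ne'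
  have hc2 : ((Cj.card-1).choose l : ℝ) ≠ 0 := Nat.cast_ne_zero.2 (Nat.choose_pos hl).ne'
  rw [sub_div, add_div, Finset.sum_div, Finset.sum_div]
  congr 1
  rw [mul_div_assoc]
  congr 1
  rw [sub_div, div_self (mul_ne_zero hc1 hc2)]
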